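/- Let n ≥ 2, let Γ ⊆ PU(1,n) be a discrete group, and let (γ_m) ⊆ Γ be a sequence tending simply to infinity. Then there exist two pseudo-projective transformations τ and ϑ such that: (1) γ_m → τ and γ_m^{−1} → ϑ in QP(n+1,ℂ); (2) the images Im(τ) and Im(ϑ) are single points lying in the Chen–Greenberg limit set Λ_CG(Γ), and they satisfy Im(τ)^⊥ = Ker(ϑ) and Im(ϑ)^⊥ = Ker(τ). -/

import Mathlib

noncomputable section

open scoped ComplexConjugate
open Filter Topology
open scoped Matrix

namespace CKG

/-- The underlying vector space `ℂ^{n+1}`. -/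
abbrev Vc (n : ℕ) := Fin (n + 1) → ℂ

/-- The space of `(n+1) × (n+1)` complex matrices. -/
abbrev Mat (n : ℕ) := Matrix (Fin (n + 1)) (Fin (n + 1)) ℂ

instance projTopInst (K V : Type*) [DivisionRing K] [AddCommGroup V] [Module K V]
    [TopologicalSpace V] : TopologicalSpace (Projectivization K V) :=
  inferInstanceAs (TopologicalSpace (Quotient (projectivizationSetoid K V)))

/-- The complex projective space `ℙⁿ_ℂ`. -/
abbrev Prj (n : ℕ) := Projectivization ℂ (Vc n)

/-- The Hermitian matrix `H` with ones at the corners `(1,n+1)`, `(n+1,1)` and the identity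
in the central `(n-1) × (n-1)` block. -/
def Hmat (n : ℕ) : Mat n := fun i j =>
  if (i = 0 ∧ j = Fin.last n) ∨ (i = Fin.last n ∧ j = 0) ∨
      (i = j ∧ i ≠ 0 ∧ i ≠ Fin.last n) then 1 else 0

/-- The Hermitian form of signature `(1,n)` induced by `H`. -/
def herm (n : ℕ) (v w : Vc n) : ℂ := ∑ i, ∑ j, v i * Hmat n i j * conj (w j)

/-- `U(1,n)`, the subgroup of `GL(n+1, ℂ)` preserving the Hermitian form `H`. -/
def U1n (n : ℕ) : Subgroup (GL (Fin (n + 1)) ℂ) where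
  carrier := {g | (g : Mat n) * Hmat n * (g : Mat n)ᴴ = Hmat n}
  one_mem' := by simp
  mul_mem' := by
    intro a b ha hb
    simp only [Set.mem_setOf_eq, Units.val_mul] at *
    have h : (a : Mat n) * (b : Mat n) * Hmat n * ((a : Mat n) * (b : Mat n))ᴴ
        = (a : Mat n) * ((b : Mat n) * Hmat n * (b : Mat n)ᴴ) * (a : Mat n)ᴴ := by
      simp only [Matrix.conjTranspose_mul, Matrix.mul_assoc]
    rw [h, hb, ha]
  inv_mem' := by
    intro x hx
    simp only [Set.mem_setOf_eq] at *
    have hdet : IsUnit (x : Mat n).det := (Matrix.isUnit_iff_isUnit_det _).mp x.isUnit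
    have hdetH : IsUnit ((x : Mat n)ᴴ).det := by
      rw [Matrix.det_conjTranspose]; exact hdet.star
    have h1 : ((x : Mat n))⁻¹ * (x : Mat n) = 1 := Matrix.nonsing_inv_mul _ hdet
    have h2 : ((x : Mat n))ᴴ * ((x : Mat n)ᴴ)⁻¹ = 1 := Matrix.mul_nonsing_inv _ hdetH
    rw [Matrix.coe_units_inv]
    calc ((x : Mat n))⁻¹ * Hmat n * (((x : Mat n))⁻¹)ᴴ
        = ((x : Mat n))⁻¹ * Hmat n * ((x : Mat n)ᴴ)⁻¹ := by
          rw [Matrix.conjTranspose_nonsing_inv]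
      _ = ((x : Mat n))⁻¹ * ((x : Mat n) * Hmat n * (x : Mat n)ᴴ) * ((x : Mat n)ᴴ)⁻¹ := by
          rw [hx]
      _ = (((x : Mat n))⁻¹ * (x : Mat n)) * Hmat n * ((x : Mat n)ᴴ * ((x : Mat n)ᴴ)⁻¹) := by
          simp only [Matrix.mul_assoc]
      _ = Hmat n := by rw [h1, h2, Matrix.one_mul, Matrix.mul_one]

/-- The linear automorphism of `ℂ^{n+1}` induced by an element of `GL(n+1,ℂ)`. -/
def glEquiv {n : ℕ} (g : GL (Fin (n + 1)) ℂ) : Vc n ≃ₗ[ℂ] Vc n :=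
  LinearMap.GeneralLinearGroup.generalLinearEquiv ℂ (Vc n)
    (Matrix.GeneralLinearGroup.toLin g)

/-- The projective transformation of `ℙⁿ_ℂ` induced by an element of `GL(n+1,ℂ)`. -/
def glAct {n : ℕ} (g : GL (Fin (n + 1)) ℂ) : Prj n → Prj n :=
  Projectivization.map (glEquiv g).toLinearMap (glEquiv g).injective

lemma glEquiv_apply {n : ℕ} (g : GL (Fin (n + 1)) ℂ) (v : Vc n) :
    glEquiv g v = (g : Mat n).mulVec v := rfl

lemma glEquiv_one {n : ℕ} (v : Vc n) : glEquiv (1 : GL (Fin (n + 1)) ℂ) v = v := by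
  rw [glEquiv_apply]
  simp

lemma glAct_one {n : ℕ} : glAct (1 : GL (Fin (n + 1)) ℂ) = id := by
  funext x
  induction x using Projectivization.ind with
  | h v hv =>
    simp only [glAct, Projectivization.map_mk, id_eq, LinearEquiv.coe_coe]
    congr 1
    exact glEquiv_one v

lemma glEquiv_mul {n : ℕ} (a b : GL (Fin (n + 1)) ℂ) (v : Vc n) :
    glEquiv (a * b) v = glEquiv a (glEquiv b v) := by
  simp only [glEquiv_apply, Units.val_mul, Matrix.mulVec_mulVec]

lemma glAct_mul {n : ℕ} (a b : GL (Fin (n + 1)) ℂ) :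
    glAct (a * b) = glAct a ∘ glAct b := by
  funext x
  induction x using Projectivization.ind with
  | h v hv =>
    simp only [glAct, Function.comp_apply, Projectivization.map_mk, LinearEquiv.coe_coe]
    congr 1
    exact glEquiv_mul a b v

/-- The action homomorphism from `U(1,n)` to the monoid of self-maps of `ℙⁿ_ℂ`. -/
def endHom (n : ℕ) : U1n n →* Function.End (Prj n) where
  toFun g := glAct (g : GL (Fin (n + 1)) ℂ)
  map_one' := glAct_one
  map_mul' _ _ := glAct_mul _ _

/-- `PU(1,n)`, the projectivization of `U(1,n)` : the quotient of `U(1,n)` by the kernel of its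
action on `ℙⁿ_ℂ`. -/
abbrev PU1n (n : ℕ) := U1n n ⧸ (endHom n).ker

/-- The action of `PU(1,n)` on `ℙⁿ_ℂ`. -/
def act (n : ℕ) (γ : PU1n n) : Prj n → Prj n :=
  QuotientGroup.lift (endHom n).ker (endHom n) (le_refl _) γ

/-- The complex hyperbolic ball `ℍⁿ_ℂ`. -/
def ball (n : ℕ) : Set (Prj n) := {p | (herm n p.rep p.rep).re < 0}

/-- The boundary `∂ℍⁿ_ℂ` of the complex hyperbolic ball. -/
def bdry (n : ℕ) : Set (Prj n) := {p | herm n p.rep p.rep = 0}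

/-- The projective hyperplane `p^⊥` of points orthogonal to `p` with respect to the form. -/
def orthHyp (n : ℕ) (p : Prj n) : Set (Prj n) := {q | herm n q.rep p.rep = 0}

/-- The Chen–Greenberg limit set: the set of accumulation points in `∂ℍⁿ_ℂ` of the
orbit of a point of `ℍⁿ_ℂ`. -/
def LambdaCG (n : ℕ) (Γ : Subgroup (PU1n n)) : Set (Prj n) :=
  {q | q ∈ bdry n ∧ ∃ x ∈ ball n, ∃ γ : ℕ → Γ, Function.Injective γ ∧
    Tendsto (fun m => act n (γ m) x) atTop (𝓝 q)}

/-- `L₀(Γ)`: the closure of the set of points with infinite isotropy group. -/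
def L0 (n : ℕ) (Γ : Subgroup (PU1n n)) : Set (Prj n) :=
  closure {p | {γ : Γ | act n γ p = p}.Infinite}

/-- The set of cluster points of the orbit `Γ z`. -/
def orbCluster (n : ℕ) (Γ : Subgroup (PU1n n)) (z : Prj n) : Set (Prj n) :=
  {q | ∃ γ : ℕ → Γ, Function.Injective γ ∧
    Tendsto (fun m => act n (γ m) z) atTop (𝓝 q)}

/-- `L₁(Γ)`: the closure of the set of cluster points of orbits of points outside `L₀(Γ)`. -/
def L1 (n : ℕ) (Γ : Subgroup (PU1n n)) : Set (Prj n) :=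
  closure (⋃ z ∈ (L0 n Γ)ᶜ, orbCluster n Γ z)

/-- `Λ(Γ) = L₀(Γ) ∪ L₁(Γ)`. -/
def Lam (n : ℕ) (Γ : Subgroup (PU1n n)) : Set (Prj n) := L0 n Γ ∪ L1 n Γ

/-- The set of cluster points of `Γ K` for a set `K`. -/
def setCluster (n : ℕ) (Γ : Subgroup (PU1n n)) (K : Set (Prj n)) : Set (Prj n) :=
  {q | ∃ (γ : ℕ → Γ) (k : ℕ → Prj n), Function.Injective γ ∧ (∀ m, k m ∈ K) ∧
    Tendsto (fun m => act n (γ m) (k m)) atTop (𝓝 q)}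

/-- `L₂(Γ)`: the closure of the union of cluster points of `Γ K` over compact sets
`K ⊆ ℙⁿ_ℂ \ Λ(Γ)`. -/
def L2 (n : ℕ) (Γ : Subgroup (PU1n n)) : Set (Prj n) :=
  closure (⋃ K ∈ {K : Set (Prj n) | IsCompact K ∧ K ⊆ (Lam n Γ)ᶜ}, setCluster n Γ K)

/-- The Kulkarni limit set `Λ_Kul(Γ) = Λ(Γ) ∪ L₂(Γ)`. -/
def LambdaKul (n : ℕ) (Γ : Subgroup (PU1n n)) : Set (Prj n) := Lam n Γ ∪ L2 n Γ

/-- The Kulkarni discontinuity region `Ω_Kul(Γ)`. -/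
def OmegaKul (n : ℕ) (Γ : Subgroup (PU1n n)) : Set (Prj n) := (LambdaKul n Γ)ᶜ

/-- The standard Hermitian inner product on `ℂ^{n+1}`. -/
def inner0 (n : ℕ) (v w : Vc n) : ℂ := ∑ i, v i * conj (w i)

/-- The Fubini–Study distance on `ℙⁿ_ℂ`. -/
def dFS (n : ℕ) (p q : Prj n) : ℝ :=
  Real.arccos (Real.sqrt (Complex.normSq (inner0 n p.rep q.rep) /
    ((inner0 n p.rep p.rep).re * (inner0 n q.rep q.rep).re)))

/-- The equicontinuity set of `Γ`: points having a neighborhood on which the family `Γ` is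
equicontinuous with respect to the Fubini–Study metric. -/
def EqSet (n : ℕ) (Γ : Subgroup (PU1n n)) : Set (Prj n) :=
  {x | ∃ U ∈ 𝓝 x, ∀ y ∈ U, ∀ ε > (0 : ℝ), ∃ V ∈ 𝓝 y, ∀ z ∈ V, ∀ γ : Γ,
    dFS n (act n γ y) (act n γ z) < ε}

/-- `Γ` acts properly discontinuously on the open set `U`:
for every compact `K ⊆ U` the set `{γ ∈ Γ | γK ∩ K ≠ ∅}` is finite. -/
def ProperlyDiscOn (n : ℕ) (Γ : Subgroup (PU1n n)) (U : Set (Prj n)) : Prop :=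
  ∀ K : Set (Prj n), K ⊆ U → IsCompact K →
    {γ : Γ | (act n γ '' K ∩ K).Nonempty}.Finite

/-- The projective line through two points, as a set of points of `ℙⁿ_ℂ`. -/
def lineThrough (n : ℕ) (p q : Prj n) : Set (Prj n) :=
  {r | r.rep ∈ Submodule.span ℂ {Projectivization.rep p, Projectivization.rep q}}

/-- `ℓ` is a projective line with `p ∈ ℓ ⊆ p^⊥`. -/
def IsLineAt (n : ℕ) (p : Prj n) (ℓ : Set (Prj n)) : Prop :=
  ∃ q : Prj n, q ≠ p ∧ q ∈ orthHyp n p ∧ ℓ = lineThrough n p q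

/-- `p^⊥(p)`: the space of projective lines `ℓ` with `p ∈ ℓ ⊆ p^⊥`. -/
def LinesAt (n : ℕ) (p : Prj n) := {ℓ : Set (Prj n) // IsLineAt n p ℓ}

/-- The angular distance `arccos √(⟨q₁,q₂⟩⟨q₂,q₁⟩/(⟨q₁,q₁⟩⟨q₂,q₂⟩))` between two points. -/
def dAngle (n : ℕ) (a b : Prj n) : ℝ :=
  Real.arccos (Real.sqrt (Complex.normSq (herm n a.rep b.rep) /
    ((herm n a.rep a.rep).re * (herm n b.rep b.rep).re)))

/-- A choice of a point `q ≠ p` on a line `ℓ ∈ p^⊥(p)`. -/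
def dirOf (n : ℕ) (p : Prj n) (ℓ : LinesAt n p) : Prj n := Classical.choose ℓ.2

/-- The metric `d_p` on `p^⊥(p)`. -/
def dLine (n : ℕ) (p : Prj n) (ℓ₁ ℓ₂ : LinesAt n p) : ℝ :=
  dAngle n (dirOf n p ℓ₁) (dirOf n p ℓ₂)

/-- `f` is an isometry from `(p^⊥(p), d_p)` to `(q^⊥(q), d_q)`. -/
def IsIsomLines (n : ℕ) (p q : Prj n) (f : LinesAt n p → LinesAt n q) : Prop :=
  Function.Bijective f ∧ ∀ ℓ₁ ℓ₂ : LinesAt n p, dLine n q (f ℓ₁) (f ℓ₂) = dLine n p ℓ₁ ℓ₂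

/-- The space `QP(n+1,ℂ)` of pseudo-projective maps: nonzero `(n+1) × (n+1)` matrices up to a
scalar. -/
abbrev QP (n : ℕ) := Projectivization ℂ (Mat n)

/-- The matrix underlying an element of `U(1,n)`. -/
def matOf (n : ℕ) (g : U1n n) : Mat n := ((g : GL (Fin (n + 1)) ℂ) : Mat n)

lemma matOf_ne_zero (n : ℕ) (g : U1n n) : matOf n g ≠ 0 := by
  intro h
  have h1 : matOf n g * (((g : GL (Fin (n + 1)) ℂ))⁻¹ : GL (Fin (n + 1)) ℂ).val = 1 :=
    Units.mul_inv _
  rw [h, zero_mul] at h1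
  have h2 := congrFun (congrFun h1 0) 0
  simp [Matrix.one_apply] at h2

/-- The pseudo-projective map determined by an element of `U(1,n)`. -/
def qpMk (n : ℕ) (g : U1n n) : QP n := Projectivization.mk ℂ (matOf n g) (matOf_ne_zero n g)

/-- The image of a pseudo-projective map, as a subset of `ℙⁿ_ℂ`. -/
def ImSet (n : ℕ) (τ : QP n) : Set (Prj n) :=
  {q | ∃ (v : Vc n) (hv : τ.rep.mulVec v ≠ 0), q = Projectivization.mk ℂ (τ.rep.mulVec v) hv}

/-- The kernel of a pseudo-projective map, as a subset of `ℙⁿ_ℂ`. -/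
def KerSet (n : ℕ) (τ : QP n) : Set (Prj n) := {q | τ.rep.mulVec q.rep = 0}

/-- The diagonal matrix `diag(e^t, 1, …, 1, e^{-t})` appearing in the Cartan decomposition. -/
def Amat (n : ℕ) (t : ℝ) : Mat n :=
  Matrix.diagonal (fun i => if i = 0 then (Real.exp t : ℂ)
    else if i = Fin.last n then (Real.exp (-t) : ℂ) else 1)

/-- The compact group `K = PU(n+1) ∩ PU(1,n)` (at the level of `U(1,n)`): unitary elements. -/
def KSet (n : ℕ) : Set (U1n n) := {k | matOf n k ∈ Matrix.unitaryGroup (Fin (n + 1)) ℂ}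

/-- A sequence in `PU(1,n)` tends simply to infinity: it consists of distinct elements, the
compact factors of the Cartan decompositions converge in `K`, and the exponents `λ_m` tend to
infinity. -/
def TendsSimply (n : ℕ) (γ : ℕ → PU1n n) : Prop :=
  Function.Injective γ ∧
  ∃ (g k₁ k₂ : ℕ → U1n n) (lam : ℕ → ℝ) (k₁' k₂' : U1n n),
    (∀ m, (QuotientGroup.mk (g m) : PU1n n) = γ m) ∧
    (∀ m, k₁ m ∈ KSet n ∧ k₂ m ∈ KSet n) ∧ k₁' ∈ KSet n ∧ k₂' ∈ KSet n ∧
    (∀ m, 0 ≤ lam m) ∧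
    (∀ m, matOf n (g m) = matOf n (k₁ m) * Amat n (lam m) * matOf n (k₂ m)) ∧
    Tendsto (fun m => matOf n (k₁ m)) atTop (𝓝 (matOf n k₁')) ∧
    Tendsto (fun m => matOf n (k₂ m)) atTop (𝓝 (matOf n k₂')) ∧
    Tendsto lam atTop atTop

/-- `𝒟_{(γ_m)}(x)`: the union over all sequences `x_m → x` of the accumulation points of
`(γ_m(x_m))`. -/
def Dlim (n : ℕ) (γ : ℕ → PU1n n) (x : Prj n) : Set (Prj n) :=
  {q | ∃ (xs : ℕ → Prj n) (φ : ℕ → ℕ), StrictMono φ ∧ Tendsto xs atTop (𝓝 x) ∧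
    Tendsto (fun m => act n (γ (φ m)) (xs (φ m))) atTop (𝓝 q)}

/-- The sequence `γ_m` converges to the constant `pt` uniformly on compact subsets of `S`.  -/
def TendstoPtUnif (n : ℕ) (γ : ℕ → PU1n n) (pt : Prj n) (S : Set (Prj n)) : Prop :=
  ∀ C : Set (Prj n), IsCompact C → C ⊆ S → ∀ ε > (0 : ℝ),
    ∀ᶠ m in atTop, ∀ w ∈ C, dFS n (act n (γ m) w) pt < ε

/-- `f` is a Cartan map for `(y, x, Γ)`. -/
def IsCartanMap (n : ℕ) (Γ : Subgroup (PU1n n)) (y x : Prj n)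
    (f : LinesAt n y → LinesAt n x) : Prop :=
  Function.Bijective f ∧
  ∃ γ : ℕ → Γ, TendsSimply n (fun m => (γ m : PU1n n)) ∧
    TendstoPtUnif n (fun m => (γ m : PU1n n)) x (orthHyp n y)ᶜ ∧
    TendstoPtUnif n (fun m => (γ m : PU1n n)⁻¹) y (orthHyp n x)ᶜ ∧
    (∀ ℓ : LinesAt n y, ∀ w ∈ ℓ.1, Dlim n (fun m => (γ m : PU1n n)) w = (f ℓ).1) ∧
    (∀ ℓ : LinesAt n y, ∀ w ∈ (f ℓ).1, Dlim n (fun m => (γ m : PU1n n)⁻¹) w = ℓ.1)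

/-- `Γ(y,x)`: the set of Cartan maps for `(y, x, Γ)`. -/
def CartanSet (n : ℕ) (Γ : Subgroup (PU1n n)) (y x : Prj n) :
    Set (LinesAt n y → LinesAt n x) :=
  {f | IsCartanMap n Γ y x f}

/-- The projective span of a set of points of `ℙⁿ_ℂ`, as a set of points. -/
def projSpan (n : ℕ) (S : Set (Prj n)) : Set (Prj n) :=
  {r | r.rep ∈ Submodule.span ℂ (Projectivization.rep '' S)}

/-- The binary operation `⋆` on maps `p^⊥(p) → q^⊥(q)`:
`(μ ⋆ ν)(ℓ) = μ(Span((ν(ℓ) ∩ p^⊥) ∪ {p}))`. -/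
def starOp (n : ℕ) (p q : Prj n) (μ ν : LinesAt n p → LinesAt n q) :
    LinesAt n p → LinesAt n q :=
  fun ℓ =>
    letI := Classical.propDecidable
      (∃ ℓ' : LinesAt n p, ℓ'.1 = projSpan n (((ν ℓ).1 ∩ orthHyp n p) ∪ {p}))
    if h : ∃ ℓ' : LinesAt n p, ℓ'.1 = projSpan n (((ν ℓ).1 ∩ orthHyp n p) ∪ {p}) then
      μ h.choose
    else μ ℓ


/-! ### Auxiliary lemmas -/

section Aux

variable {n : ℕ}

lemma zero_ne_last (hn : n ≠ 0) : (0 : Fin (n+1)) ≠ Fin.last n := by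
  intro h
  have := congrArg Fin.val h
  simp [Fin.last] at this
  omega

lemma Hmat_eq (hn : n ≠ 0) (i j : Fin (n+1)) :
    Hmat n i j = if j = Equiv.swap 0 (Fin.last n) i then 1 else 0 := by
  have h0 := zero_ne_last hn
  unfold Hmat
  rcases eq_or_ne i 0 with hi | hi
  · subst hi
    rw [Equiv.swap_apply_left]
    simp [h0, h0.symm]
  · rcases eq_or_ne i (Fin.last n) with hil | hil
    · subst hil
      rw [Equiv.swap_apply_right]
      simp [h0, h0.symm, hi]
    · rw [Equiv.swap_apply_of_ne_of_ne hi hil]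
      simp [hi, hil, eq_comm]

lemma Hmat_mul_Hmat (hn : n ≠ 0) : Hmat n * Hmat n = 1 := by
  ext i k
  rw [Matrix.mul_apply]
  simp only [Hmat_eq hn]
  rw [Finset.sum_congr rfl (fun j _ => by rw [ite_mul, one_mul, zero_mul])]
  rw [Finset.sum_ite_eq' Finset.univ (Equiv.swap 0 (Fin.last n) i)
    (fun j => if k = Equiv.swap 0 (Fin.last n) j then (1:ℂ) else 0)]
  simp [Equiv.swap_apply_self, Matrix.one_apply, eq_comm]

lemma Hmat_transpose : (Hmat n)ᵀ = Hmat n := by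
  ext i j
  simp only [Matrix.transpose_apply]
  unfold Hmat
  congr 1
  simp only [eq_iff_iff]
  constructor
  · rintro (⟨h1, h2⟩ | ⟨h1, h2⟩ | ⟨h1, h2, h3⟩)
    · exact Or.inr (Or.inl ⟨h2, h1⟩)
    · exact Or.inl ⟨h2, h1⟩
    · exact Or.inr (Or.inr ⟨h1.symm, h1 ▸ h2, h1 ▸ h3⟩)
  · rintro (⟨h1, h2⟩ | ⟨h1, h2⟩ | ⟨h1, h2, h3⟩)
    · exact Or.inr (Or.inl ⟨h2, h1⟩)
    · exact Or.inl ⟨h2, h1⟩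
    · exact Or.inr (Or.inr ⟨h1.symm, h1 ▸ h2, h1 ▸ h3⟩)

lemma herm_eq_sum (hn : n ≠ 0) (v w : Vc n) :
    herm n v w = ∑ i, v i * conj (w (Equiv.swap 0 (Fin.last n) i)) := by
  unfold herm
  refine Finset.sum_congr rfl (fun i _ => ?_)
  rw [Finset.sum_congr rfl (fun j _ => by
    rw [Hmat_eq hn, mul_ite, mul_one, mul_zero, ite_mul, zero_mul])]
  rw [Finset.sum_ite_eq' Finset.univ (Equiv.swap 0 (Fin.last n) i)
    (fun j => v i * conj (w j))]
  simp

lemma herm_dotProduct (v w : Vc n) :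
    herm n v w = v ⬝ᵥ (Hmat n) *ᵥ (star w) := by
  unfold herm
  rw [dotProduct]
  refine Finset.sum_congr rfl (fun i _ => ?_)
  rw [Matrix.mulVec, dotProduct, Finset.mul_sum]
  refine Finset.sum_congr rfl (fun j _ => ?_)
  simp [mul_assoc, Pi.star_apply, RCLike.star_def]

lemma conjT_mul_Hmat (hn : n ≠ 0) (G : Mat n) (hG : G * Hmat n * Gᴴ = Hmat n)
    (hGu : IsUnit G.det) : Gᴴ * Hmat n * G = Hmat n := by
  have h2 : Hmat n * Gᴴ = G⁻¹ * Hmat n := by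
    have := congrArg (fun M => G⁻¹ * M) hG
    simpa [← Matrix.mul_assoc, Matrix.nonsing_inv_mul _ hGu] using this
  have h1 : Gᴴ = Hmat n * G⁻¹ * Hmat n := by
    calc Gᴴ = (Hmat n * Hmat n) * Gᴴ := by rw [Hmat_mul_Hmat hn, one_mul]
    _ = Hmat n * (Hmat n * Gᴴ) := by rw [Matrix.mul_assoc]
    _ = Hmat n * (G⁻¹ * Hmat n) := by rw [h2]
    _ = Hmat n * G⁻¹ * Hmat n := by rw [Matrix.mul_assoc]
  rw [h1]
  calc Hmat n * G⁻¹ * Hmat n * Hmat n * G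
      = Hmat n * G⁻¹ * (Hmat n * Hmat n) * G := by simp [Matrix.mul_assoc]
    _ = Hmat n * (G⁻¹ * G) := by rw [Hmat_mul_Hmat hn]; simp [Matrix.mul_assoc]
    _ = Hmat n := by rw [Matrix.nonsing_inv_mul _ hGu, Matrix.mul_one]

lemma transpose_mul_Hmat (hn : n ≠ 0) (G : Mat n) (hG : G * Hmat n * Gᴴ = Hmat n)
    (hGu : IsUnit G.det) : Gᵀ * Hmat n * Gᴴᵀ = Hmat n := by
  have := congrArg Matrix.transpose (conjT_mul_Hmat hn G hG hGu)
  simpa [Matrix.transpose_mul, Hmat_transpose, Matrix.mul_assoc] using this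

lemma herm_mulVec_inv (hn : n ≠ 0) (G : Mat n) (hG : G * Hmat n * Gᴴ = Hmat n)
    (hGu : IsUnit G.det) (v w : Vc n) :
    herm n (G *ᵥ v) (G *ᵥ w) = herm n v w := by
  rw [herm_dotProduct, herm_dotProduct]
  have hstar : star (G *ᵥ w) = Gᴴᵀ *ᵥ star w := by
    rw [Matrix.star_mulVec, Matrix.mulVec_transpose]
  rw [hstar, Matrix.mulVec_mulVec]
  have hdot : ∀ u : Vc n, (G *ᵥ v) ⬝ᵥ u = v ⬝ᵥ Gᵀ *ᵥ u := by
    intro u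
    rw [dotProduct_comm, Matrix.dotProduct_mulVec, dotProduct_comm,
      Matrix.mulVec_transpose]
  rw [hdot, Matrix.mulVec_mulVec, ← Matrix.mul_assoc, transpose_mul_Hmat hn G hG hGu]

lemma herm_smul_left (a : ℂ) (v w : Vc n) : herm n (a • v) w = a * herm n v w := by
  unfold herm
  rw [Finset.mul_sum]
  refine Finset.sum_congr rfl fun i _ => ?_
  rw [Finset.mul_sum]
  exact Finset.sum_congr rfl fun j _ => by simp [Pi.smul_apply]; ring

lemma herm_smul_right (b : ℂ) (v w : Vc n) : herm n v (b • w) = conj b * herm n v w := by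
  unfold herm
  rw [Finset.mul_sum]
  refine Finset.sum_congr rfl fun i _ => ?_
  rw [Finset.mul_sum]
  exact Finset.sum_congr rfl fun j _ => by simp [Pi.smul_apply]; ring

lemma herm_single_zero (hn : n ≠ 0) (v : Vc n) :
    herm n v (Pi.single 0 1) = v (Fin.last n) := by
  rw [herm_eq_sum hn]
  have key : ∀ i : Fin (n+1), v i * conj ((Pi.single 0 1 : Vc n) (Equiv.swap 0 (Fin.last n) i))
      = if i = Fin.last n then v i else 0 := by
    intro i
    rcases eq_or_ne i (Fin.last n) with h | h
    · subst h; rw [Equiv.swap_apply_right]; simp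
    · have : Equiv.swap 0 (Fin.last n) i ≠ 0 := by
        intro hc
        have := congrArg (Equiv.swap 0 (Fin.last n)) hc
        rw [Equiv.swap_apply_self, Equiv.swap_apply_left] at this
        exact h this
      rw [Pi.single_eq_of_ne this]
      simp [h]
  rw [Finset.sum_congr rfl fun i _ => key i, Finset.sum_ite_eq' Finset.univ]
  simp

lemma herm_single_last (hn : n ≠ 0) (v : Vc n) :
    herm n v (Pi.single (Fin.last n) 1) = v 0 := by
  rw [herm_eq_sum hn]
  have key : ∀ i : Fin (n+1),
      v i * conj ((Pi.single (Fin.last n) 1 : Vc n) (Equiv.swap 0 (Fin.last n) i))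
      = if i = 0 then v i else 0 := by
    intro i
    rcases eq_or_ne i 0 with h | h
    · subst h; rw [Equiv.swap_apply_left]; simp
    · have : Equiv.swap 0 (Fin.last n) i ≠ Fin.last n := by
        intro hc
        have := congrArg (Equiv.swap 0 (Fin.last n)) hc
        rw [Equiv.swap_apply_self, Equiv.swap_apply_right] at this
        exact h this
      rw [Pi.single_eq_of_ne this]
      simp [h]
  rw [Finset.sum_congr rfl fun i _ => key i, Finset.sum_ite_eq' Finset.univ]
  simp

lemma herm_re_nonneg_of_zero (hn : n ≠ 0) (u : Vc n) (h : u 0 = 0) :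
    0 ≤ (herm n u u).re := by
  rw [herm_eq_sum hn, Complex.re_sum]
  refine Finset.sum_nonneg fun i _ => ?_
  rcases eq_or_ne i 0 with h0 | h0
  · subst h0; simp [h]
  · rcases eq_or_ne i (Fin.last n) with hl | hl
    · subst hl; rw [Equiv.swap_apply_right]; simp [h]
    · rw [Equiv.swap_apply_of_ne_of_ne h0 hl, Complex.mul_conj]
      simp [Complex.normSq_nonneg]

lemma herm_re_nonneg_of_last (hn : n ≠ 0) (u : Vc n) (h : u (Fin.last n) = 0) :
    0 ≤ (herm n u u).re := by
  rw [herm_eq_sum hn, Complex.re_sum]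
  refine Finset.sum_nonneg fun i _ => ?_
  rcases eq_or_ne i 0 with h0 | h0
  · subst h0; rw [Equiv.swap_apply_left]; simp [h]
  · rcases eq_or_ne i (Fin.last n) with hl | hl
    · subst hl; simp [h]
    · rw [Equiv.swap_apply_of_ne_of_ne h0 hl, Complex.mul_conj]
      simp [Complex.normSq_nonneg]

lemma matOf_det_isUnit (h : U1n n) : IsUnit (matOf n h).det :=
  (Matrix.isUnit_iff_isUnit_det _).mp (h : GL (Fin (n+1)) ℂ).isUnit

lemma u1n_rel (h : U1n n) : matOf n h * Hmat n * (matOf n h)ᴴ = Hmat n := h.2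

lemma herm_matOf (hn : n ≠ 0) (h : U1n n) (v w : Vc n) :
    herm n (matOf n h *ᵥ v) (matOf n h *ᵥ w) = herm n v w :=
  herm_mulVec_inv hn _ (u1n_rel h) (matOf_det_isUnit h) v w

lemma matOf_inv (h : U1n n) : matOf n (h⁻¹) = (matOf n h)⁻¹ :=
  Matrix.coe_units_inv (h : GL (Fin (n+1)) ℂ)

lemma mulVec_ne_zero (G : Mat n) (hG : IsUnit G.det) {v : Vc n} (hv : v ≠ 0) :
    G *ᵥ v ≠ 0 := by
  intro h
  apply hv
  have h2 : G⁻¹ *ᵥ (G *ᵥ v) = v := by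
    rw [Matrix.mulVec_mulVec, Matrix.nonsing_inv_mul _ hG, Matrix.one_mulVec]
  rw [← h2, h, Matrix.mulVec_zero]

lemma Amat_mul_neg (t : ℝ) : Amat n t * Amat n (-t) = 1 := by
  have hfun : (fun i : Fin (n+1) =>
      (if i = 0 then (Real.exp t : ℂ) else if i = Fin.last n then (Real.exp (-t) : ℂ) else 1) *
      (if i = 0 then (Real.exp (-t) : ℂ) else if i = Fin.last n then (Real.exp (-(-t)) : ℂ) else 1))
      = fun _ => (1:ℂ) := by
    funext i
    split_ifs with h1 h2
    · rw [← Complex.ofReal_mul, ← Real.exp_add, add_neg_cancel, Real.exp_zero,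
        Complex.ofReal_one]
    · rw [neg_neg, ← Complex.ofReal_mul, ← Real.exp_add, neg_add_cancel, Real.exp_zero,
        Complex.ofReal_one]
    · rw [mul_one]
  show Matrix.diagonal _ * Matrix.diagonal _ = 1
  rw [Matrix.diagonal_mul_diagonal, hfun, Matrix.diagonal_one]

lemma Amat_inv (t : ℝ) : (Amat n t)⁻¹ = Amat n (-t) :=
  Matrix.inv_eq_right_inv (Amat_mul_neg t)

lemma kset_inv_eq_conjT (h : U1n n) (hk : h ∈ KSet n) :
    (matOf n h)⁻¹ = (matOf n h)ᴴ := by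
  have h1 : matOf n h * star (matOf n h) = 1 := (Matrix.mem_unitaryGroup_iff).mp hk
  exact Matrix.inv_eq_right_inv h1

/-- The rank-one limit matrix `diag(1,0,…,0)`. -/
def Emat (n : ℕ) : Mat n := Matrix.diagonal (fun i => if i = 0 then 1 else 0)

/-- The rank-one limit matrix `diag(0,…,0,1)`. -/
def Fmat (n : ℕ) : Mat n := Matrix.diagonal (fun i => if i = Fin.last n then 1 else 0)

lemma Emat_mulVec (u : Vc n) : Emat n *ᵥ u = (u 0) • (Pi.single 0 1 : Vc n) := by
  funext i
  rw [Emat, Matrix.mulVec_diagonal]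
  rcases eq_or_ne i 0 with h | h
  · subst h; simp
  · simp [h, Pi.single_eq_of_ne h]

lemma Fmat_mulVec (u : Vc n) :
    Fmat n *ᵥ u = (u (Fin.last n)) • (Pi.single (Fin.last n) 1 : Vc n) := by
  funext i
  rw [Fmat, Matrix.mulVec_diagonal]
  rcases eq_or_ne i (Fin.last n) with h | h
  · subst h; simp
  · simp [h, Pi.single_eq_of_ne h]

lemma smul_Amat (t : ℝ) :
    (Real.exp (-t) : ℂ) • Amat n t = Matrix.diagonal (fun i : Fin (n+1) =>
      if i = 0 then (1:ℂ) else if i = Fin.last n then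
        (Real.exp (-t) : ℂ) * (Real.exp (-t) : ℂ) else (Real.exp (-t) : ℂ)) := by
  ext i j
  rcases eq_or_ne i j with rfl | hij
  · simp only [Matrix.smul_apply, Amat, Matrix.diagonal_apply_eq, smul_eq_mul]
    split_ifs with h1 h2
    · rw [← Complex.ofReal_mul, ← Real.exp_add, neg_add_cancel, Real.exp_zero,
        Complex.ofReal_one]
    · rfl
    · rw [mul_one]
  · simp [Amat, Matrix.diagonal_apply_ne _ hij]

lemma smul_Amat_neg (t : ℝ) :
    (Real.exp (-t) : ℂ) • Amat n (-t) = Matrix.diagonal (fun i : Fin (n+1) =>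
      if i = 0 then (Real.exp (-t) : ℂ) * (Real.exp (-t) : ℂ) else if i = Fin.last n then
        (1:ℂ) else (Real.exp (-t) : ℂ)) := by
  ext i j
  rcases eq_or_ne i j with rfl | hij
  · simp only [Matrix.smul_apply, Amat, Matrix.diagonal_apply_eq, smul_eq_mul]
    split_ifs with h1 h2
    · rfl
    · rw [neg_neg, ← Complex.ofReal_mul, ← Real.exp_add, neg_add_cancel, Real.exp_zero,
        Complex.ofReal_one]
    · rw [mul_one]
  · simp [Amat, Matrix.diagonal_apply_ne _ hij]

lemma tendsto_exp_neg_complex (lam : ℕ → ℝ) (h : Tendsto lam atTop atTop) :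
    Tendsto (fun m => (Real.exp (-lam m) : ℂ)) atTop (𝓝 0) := by
  have h1 : Tendsto (fun m => Real.exp (-lam m)) atTop (𝓝 0) :=
    Real.tendsto_exp_atBot.comp (tendsto_neg_atTop_atBot.comp h)
  have h2 := (Complex.continuous_ofReal.tendsto 0).comp h1
  simpa [Function.comp_def] using h2

lemma tendsto_scaled_Amat (hn : n ≠ 0) (lam : ℕ → ℝ) (h : Tendsto lam atTop atTop) :
    Tendsto (fun m => (Real.exp (-lam m) : ℂ) • Amat n (lam m)) atTop (𝓝 (Emat n)) := by
  have he := tendsto_exp_neg_complex lam h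
  have hvec : Tendsto (fun m => (fun i : Fin (n+1) => if i = 0 then (1:ℂ)
      else if i = Fin.last n then (Real.exp (-lam m) : ℂ) * (Real.exp (-lam m) : ℂ)
      else (Real.exp (-lam m) : ℂ))) atTop
      (𝓝 (fun i : Fin (n+1) => if i = 0 then (1:ℂ) else 0)) := by
    rw [tendsto_pi_nhds]
    intro i
    by_cases h1 : i = 0
    · subst h1
      simp only [if_pos rfl]
      exact tendsto_const_nhds
    · by_cases h2 : i = Fin.last n
      · subst h2
        simp only [if_neg h1]
        simpa [if_pos rfl] using he.mul he
      · simp only [if_neg h1, if_neg h2]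
        exact he
  have hc : Continuous fun v : Fin (n+1) → ℂ => Matrix.diagonal v :=
    Continuous.matrix_diagonal continuous_id
  have := (hc.tendsto _).comp hvec
  refine Tendsto.congr (fun m => (smul_Amat (lam m)).symm) ?_
  exact this

lemma tendsto_scaled_Amat_neg (hn : n ≠ 0) (lam : ℕ → ℝ) (h : Tendsto lam atTop atTop) :
    Tendsto (fun m => (Real.exp (-lam m) : ℂ) • Amat n (-(lam m))) atTop (𝓝 (Fmat n)) := by
  have he := tendsto_exp_neg_complex lam h
  have hvec : Tendsto (fun m => (fun i : Fin (n+1) =>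
      if i = 0 then (Real.exp (-lam m) : ℂ) * (Real.exp (-lam m) : ℂ)
      else if i = Fin.last n then (1:ℂ)
      else (Real.exp (-lam m) : ℂ))) atTop
      (𝓝 (fun i : Fin (n+1) => if i = Fin.last n then (1:ℂ) else 0)) := by
    rw [tendsto_pi_nhds]
    intro i
    by_cases h1 : i = 0
    · subst h1
      simp only [if_pos rfl, if_neg (zero_ne_last hn)]
      simpa using he.mul he
    · by_cases h2 : i = Fin.last n
      · subst h2
        simp only [if_neg h1, if_pos rfl]
        exact tendsto_const_nhds
      · simp only [if_neg h1, if_neg h2]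
        exact he
  have hc : Continuous fun v : Fin (n+1) → ℂ => Matrix.diagonal v :=
    Continuous.matrix_diagonal continuous_id
  have := (hc.tendsto _).comp hvec
  refine Tendsto.congr (fun m => (smul_Amat_neg (lam m)).symm) ?_
  exact this

lemma tendsto_mul3 {X Y Z : ℕ → Mat n} {X0 Y0 Z0 : Mat n}
    (hX : Tendsto X atTop (𝓝 X0)) (hY : Tendsto Y atTop (𝓝 Y0))
    (hZ : Tendsto Z atTop (𝓝 Z0)) :
    Tendsto (fun m => X m * Y m * Z m) atTop (𝓝 (X0 * Y0 * Z0)) := by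
  exact (hX.mul hY).mul hZ

lemma tendsto_projmk {V : Type*} [AddCommGroup V] [Module ℂ V] [TopologicalSpace V]
    (v : ℕ → V) (L : V) (hv : ∀ m, v m ≠ 0) (hL : L ≠ 0)
    (h : Tendsto v atTop (𝓝 L)) :
    Tendsto (fun m => Projectivization.mk ℂ (v m) (hv m)) atTop
      (𝓝 (Projectivization.mk ℂ L hL)) := by
  have h1 : Tendsto (fun m => (⟨v m, hv m⟩ : {x : V // x ≠ 0})) atTop (𝓝 ⟨L, hL⟩) :=
    tendsto_subtype_rng.mpr h
  exact (continuous_quotient_mk'.tendsto _).comp h1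

lemma mk_eq_of_smul {V : Type*} [AddCommGroup V] [Module ℂ V] {x v : V}
    {hx : x ≠ 0} {hv : v ≠ 0} (c : ℂ) (h : x = c • v) :
    Projectivization.mk ℂ x hx = Projectivization.mk ℂ v hv := by
  have hc : c ≠ 0 := by
    rintro rfl
    rw [zero_smul] at h
    exact hx h
  exact (Projectivization.mk_eq_mk_iff ℂ _ _ _ _).mpr ⟨Units.mk0 c hc, h.symm⟩

lemma rep_scalar {V : Type*} [AddCommGroup V] [Module ℂ V] (v : V) (hv : v ≠ 0) :
    ∃ a : ℂˣ, (Projectivization.mk ℂ v hv).rep = (a : ℂ) • v := by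
  obtain ⟨a, ha⟩ := (Projectivization.mk_eq_mk_iff ℂ _ _
    (Projectivization.rep_nonzero _) hv).mp (Projectivization.mk_rep _)
  exact ⟨a, by rw [← ha, Units.smul_def]⟩

lemma act_mk (h : U1n n) (w : Vc n) (hw : w ≠ 0) (hw2 : matOf n h *ᵥ w ≠ 0) :
    act n (QuotientGroup.mk h) (Projectivization.mk ℂ w hw)
      = Projectivization.mk ℂ (matOf n h *ᵥ w) hw2 := by
  have h1 : act n (QuotientGroup.mk h) (Projectivization.mk ℂ w hw)
      = glAct (h : GL (Fin (n+1)) ℂ) (Projectivization.mk ℂ w hw) := by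
    unfold act
    rw [QuotientGroup.lift_mk]
    rfl
  rw [h1]
  unfold glAct
  rw [Projectivization.map_mk]
  exact mk_eq_of_smul 1 (by rw [one_smul]; rfl)

end Aux


/-- If `Γ ⊆ PU(1,n)` is discrete and `(γ_m) ⊆ Γ` tends simply to infinity,
then there are pseudo-projective maps `τ`, `ϑ` with `γ_m → τ`, `γ_m⁻¹ → ϑ` in `QP(n+1,ℂ)`, whose
images are single points of the Chen–Greenberg limit set satisfying `Im(τ)^⊥ = Ker(ϑ)` and
`Im(ϑ)^⊥ = Ker(τ)`. -/
theorem pseudo_projective_limits_of_tends_simply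
    (n : ℕ) (hn : 2 ≤ n) (Γ : Subgroup (PU1n n)) (hdisc : DiscreteTopology Γ)
    (γ : ℕ → Γ) (hts : TendsSimply n (fun m => (γ m : PU1n n))) :
    ∃ (τ θ : QP n) (ptau pth : Prj n) (g : ℕ → U1n n),
      (∀ m, (QuotientGroup.mk (g m) : PU1n n) = (γ m : PU1n n)) ∧
      Tendsto (fun m => qpMk n (g m)) atTop (𝓝 τ) ∧
      Tendsto (fun m => qpMk n ((g m)⁻¹)) atTop (𝓝 θ) ∧
      ptau ∈ LambdaCG n Γ ∧ pth ∈ LambdaCG n Γ ∧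
      ImSet n τ = {ptau} ∧ ImSet n θ = {pth} ∧
      orthHyp n ptau = KerSet n θ ∧ orthHyp n pth = KerSet n τ := by
  obtain ⟨hinj, g, k₁, k₂, lam, K1, K2, hg, hkK, hK1, hK2, hlam0, hdec, hc1, hc2, hlt⟩ := hts
  have hn0 : n ≠ 0 := by omega
  have hM1d : IsUnit (matOf n K1).det := matOf_det_isUnit K1
  have hM2d : IsUnit (matOf n K2).det := matOf_det_isUnit K2
  have hM1invd : IsUnit ((matOf n K1)⁻¹).det := by
    rw [← matOf_inv]; exact matOf_det_isUnit K1⁻¹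
  have hM2invd : IsUnit ((matOf n K2)⁻¹).det := by
    rw [← matOf_inv]; exact matOf_det_isUnit K2⁻¹
  set eC : ℕ → ℂ := fun m => ((Real.exp (-lam m) : ℝ) : ℂ) with heCdef
  have heCne : ∀ m, eC m ≠ 0 := fun m =>
    Complex.ofReal_ne_zero.mpr (Real.exp_ne_zero _)
  have hsingle0 : (Pi.single 0 1 : Vc n) ≠ 0 := by
    intro h
    have := congrFun h 0
    simp at this
  have hsinglel : (Pi.single (Fin.last n) 1 : Vc n) ≠ 0 := by
    intro h
    have := congrFun h (Fin.last n)
    simp at this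
  set c₁ : Vc n := matOf n K1 *ᵥ Pi.single 0 1 with hc₁def
  set cθ : Vc n := (matOf n K2)⁻¹ *ᵥ Pi.single (Fin.last n) 1 with hcθdef
  have hc₁ne : c₁ ≠ 0 := mulVec_ne_zero _ hM1d hsingle0
  have hcθne : cθ ≠ 0 := mulVec_ne_zero _ hM2invd hsinglel
  set Mlim : Mat n := matOf n K1 * Emat n * matOf n K2 with hMlimdef
  set Nlim : Mat n := (matOf n K2)⁻¹ * Fmat n * (matOf n K1)⁻¹ with hNlimdef
  have hMlimVec : ∀ v : Vc n, Mlim *ᵥ v = ((matOf n K2 *ᵥ v) 0) • c₁ := by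
    intro v
    rw [hMlimdef, ← Matrix.mulVec_mulVec, ← Matrix.mulVec_mulVec, Emat_mulVec,
      Matrix.mulVec_smul]
  have hNlimVec : ∀ v : Vc n,
      Nlim *ᵥ v = (((matOf n K1)⁻¹ *ᵥ v) (Fin.last n)) • cθ := by
    intro v
    rw [hNlimdef, ← Matrix.mulVec_mulVec, ← Matrix.mulVec_mulVec, Fmat_mulVec,
      Matrix.mulVec_smul]
  set w₀ : Vc n := fun i => if i = 0 then 1 else if i = Fin.last n then -(1/2 : ℂ) else 0
    with hw₀def
  have hw₀0 : w₀ 0 = 1 := by simp [hw₀def]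
  have hw₀l : w₀ (Fin.last n) = -(1/2 : ℂ) := by
    rw [hw₀def]
    simp [(zero_ne_last hn0).symm]
  have hw₀ne : w₀ ≠ 0 := by
    intro h
    have := congrFun h 0
    rw [hw₀0] at this
    simp at this
  have hw₀herm : herm n w₀ w₀ = -1 := by
    rw [herm_eq_sum hn0]
    have key : ∀ i : Fin (n+1), w₀ i * conj (w₀ (Equiv.swap 0 (Fin.last n) i))
        = (if i = 0 then (-(1/2) : ℂ) else 0) + (if i = Fin.last n then (-(1/2) : ℂ) else 0) := by
      intro i
      by_cases h1 : i = 0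
      · subst h1
        rw [Equiv.swap_apply_left, hw₀0, hw₀l, if_pos rfl, if_neg (zero_ne_last hn0)]
        rw [map_neg, map_div₀, map_one, map_ofNat]
        ring
      · by_cases h2 : i = Fin.last n
        · subst h2
          rw [Equiv.swap_apply_right, hw₀0, hw₀l, if_neg h1, if_pos rfl]
          rw [map_one]
          ring
        · rw [Equiv.swap_apply_of_ne_of_ne h1 h2, if_neg h1, if_neg h2]
          have : w₀ i = 0 := by rw [hw₀def]; simp [h1, h2]
          rw [this, zero_mul, add_zero]
    rw [Finset.sum_congr rfl fun i _ => key i, Finset.sum_add_distrib,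
      Finset.sum_ite_eq' Finset.univ, Finset.sum_ite_eq' Finset.univ]
    simp
    norm_num
  set x₀ : Prj n := Projectivization.mk ℂ w₀ hw₀ne with hx₀def
  have hx₀ball : x₀ ∈ ball n := by
    obtain ⟨a, ha⟩ := rep_scalar w₀ hw₀ne
    show (herm n x₀.rep x₀.rep).re < 0
    rw [hx₀def, ha, herm_smul_left, herm_smul_right, hw₀herm]
    have hre : (a : ℂ) * (conj (a : ℂ) * -1) = -((Complex.normSq (a : ℂ) : ℝ) : ℂ) := by
      rw [← Complex.mul_conj]
      ring
    rw [hre]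
    simp only [Complex.neg_re, Complex.ofReal_re]
    have : 0 < Complex.normSq (a : ℂ) := Complex.normSq_pos.mpr (Units.ne_zero a)
    linarith
  have hval2 : (matOf n K2 *ᵥ w₀) 0 ≠ 0 := by
    intro h
    have h1 := herm_re_nonneg_of_zero hn0 (matOf n K2 *ᵥ w₀) h
    rw [herm_matOf hn0 K2 w₀ w₀, hw₀herm] at h1
    norm_num at h1
  have hval1 : ((matOf n K1)⁻¹ *ᵥ w₀) (Fin.last n) ≠ 0 := by
    intro h
    have h1 := herm_re_nonneg_of_last hn0 ((matOf n K1)⁻¹ *ᵥ w₀) h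
    rw [← matOf_inv, herm_matOf hn0 K1⁻¹ w₀ w₀, hw₀herm] at h1
    norm_num at h1
  have hMw₀ : Mlim *ᵥ w₀ = ((matOf n K2 *ᵥ w₀) 0) • c₁ := hMlimVec w₀
  have hMw₀ne : Mlim *ᵥ w₀ ≠ 0 := by
    rw [hMw₀]; exact smul_ne_zero hval2 hc₁ne
  have hMlimne : Mlim ≠ 0 := by
    intro h
    apply hMw₀ne
    rw [h, Matrix.zero_mulVec]
  have hNw₀ : Nlim *ᵥ w₀ = (((matOf n K1)⁻¹ *ᵥ w₀) (Fin.last n)) • cθ := hNlimVec w₀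
  have hNw₀ne : Nlim *ᵥ w₀ ≠ 0 := by
    rw [hNw₀]; exact smul_ne_zero hval1 hcθne
  have hNlimne : Nlim ≠ 0 := by
    intro h
    apply hNw₀ne
    rw [h, Matrix.zero_mulVec]
  -- convergence of scaled matrices
  have hMseq : Tendsto (fun m => eC m • matOf n (g m)) atTop (𝓝 Mlim) := by
    have heq : ∀ m, eC m • matOf n (g m)
        = matOf n (k₁ m) * (eC m • Amat n (lam m)) * matOf n (k₂ m) := by
      intro m
      rw [hdec m, Matrix.mul_smul, Matrix.smul_mul]
    exact Tendsto.congr (fun m => (heq m).symm)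
      (tendsto_mul3 hc1 (tendsto_scaled_Amat hn0 lam hlt) hc2)
  have hinvdec : ∀ m, matOf n ((g m)⁻¹)
      = (matOf n (k₂ m))ᴴ * Amat n (-(lam m)) * (matOf n (k₁ m))ᴴ := by
    intro m
    rw [matOf_inv, hdec m, Matrix.mul_inv_rev, Matrix.mul_inv_rev, Amat_inv,
      kset_inv_eq_conjT _ ((hkK m).1), kset_inv_eq_conjT _ ((hkK m).2), Matrix.mul_assoc]
  have hNseq : Tendsto (fun m => eC m • matOf n ((g m)⁻¹)) atTop (𝓝 Nlim) := by
    have heq : ∀ m, eC m • matOf n ((g m)⁻¹)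
        = (matOf n (k₂ m))ᴴ * (eC m • Amat n (-(lam m))) * (matOf n (k₁ m))ᴴ := by
      intro m
      rw [hinvdec m, Matrix.mul_smul, Matrix.smul_mul]
    have hct : Continuous fun M : Mat n => Mᴴ :=
      Continuous.matrix_conjTranspose continuous_id
    have h2 : Tendsto (fun m => (matOf n (k₂ m))ᴴ) atTop (𝓝 ((matOf n K2)ᴴ)) :=
      (hct.tendsto _).comp hc2
    have h1 : Tendsto (fun m => (matOf n (k₁ m))ᴴ) atTop (𝓝 ((matOf n K1)ᴴ)) :=
      (hct.tendsto _).comp hc1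
    have h3 := tendsto_mul3 h2 (tendsto_scaled_Amat_neg hn0 lam hlt) h1
    have hNeq : Nlim = (matOf n K2)ᴴ * Fmat n * (matOf n K1)ᴴ := by
      rw [hNlimdef, kset_inv_eq_conjT K2 hK2, kset_inv_eq_conjT K1 hK1]
    rw [hNeq]
    exact Tendsto.congr (fun m => (heq m).symm) h3
  -- convergence in QP
  have hτseqv : ∀ m, eC m • matOf n (g m) ≠ 0 := fun m =>
    smul_ne_zero (heCne m) (matOf_ne_zero n (g m))
  have hθseqv : ∀ m, eC m • matOf n ((g m)⁻¹) ≠ 0 := fun m =>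
    smul_ne_zero (heCne m) (matOf_ne_zero n ((g m)⁻¹))
  have hqτ : ∀ m, qpMk n (g m)
      = Projectivization.mk ℂ (eC m • matOf n (g m)) (hτseqv m) := by
    intro m
    exact mk_eq_of_smul (eC m)⁻¹
      (by rw [smul_smul, inv_mul_cancel₀ (heCne m), one_smul])
  have hqθ : ∀ m, qpMk n ((g m)⁻¹)
      = Projectivization.mk ℂ (eC m • matOf n ((g m)⁻¹)) (hθseqv m) := by
    intro m
    exact mk_eq_of_smul (eC m)⁻¹
      (by rw [smul_smul, inv_mul_cancel₀ (heCne m), one_smul])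
  have hqτt : Tendsto (fun m => qpMk n (g m)) atTop
      (𝓝 (Projectivization.mk ℂ Mlim hMlimne)) := by
    refine Tendsto.congr (fun m => (hqτ m).symm) ?_
    exact tendsto_projmk _ _ hτseqv hMlimne hMseq
  have hqθt : Tendsto (fun m => qpMk n ((g m)⁻¹)) atTop
      (𝓝 (Projectivization.mk ℂ Nlim hNlimne)) := by
    refine Tendsto.congr (fun m => (hqθ m).symm) ?_
    exact tendsto_projmk _ _ hθseqv hNlimne hNseq
  -- orbit convergence
  have hγinj : Function.Injective γ := fun a b hab =>
    hinj (congrArg (fun x : Γ => (x : PU1n n)) hab)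
  have hg' : ∀ m, (QuotientGroup.mk (g m) : PU1n n) = ((γ m : Γ) : PU1n n) := hg
  have hvm : ∀ m, matOf n (g m) *ᵥ w₀ ≠ 0 := fun m =>
    mulVec_ne_zero _ (matOf_det_isUnit (g m)) hw₀ne
  have hsvm : ∀ m, eC m • (matOf n (g m) *ᵥ w₀) ≠ 0 := fun m =>
    smul_ne_zero (heCne m) (hvm m)
  have hvminv : ∀ m, matOf n ((g m)⁻¹) *ᵥ w₀ ≠ 0 := fun m =>
    mulVec_ne_zero _ (matOf_det_isUnit ((g m)⁻¹)) hw₀ne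
  have hsvminv : ∀ m, eC m • (matOf n ((g m)⁻¹) *ᵥ w₀) ≠ 0 := fun m =>
    smul_ne_zero (heCne m) (hvminv m)
  have hactτ : ∀ m, act n ((γ m : PU1n n)) x₀
      = Projectivization.mk ℂ (eC m • (matOf n (g m) *ᵥ w₀)) (hsvm m) := by
    intro m
    rw [← hg' m, hx₀def, act_mk (g m) w₀ hw₀ne (hvm m)]
    exact mk_eq_of_smul (eC m)⁻¹
      (by rw [smul_smul, inv_mul_cancel₀ (heCne m), one_smul])
  have hγcoe : ∀ m, (QuotientGroup.mk ((g m)⁻¹) : PU1n n) = (((γ m)⁻¹ : Γ) : PU1n n) := by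
    intro m
    rw [QuotientGroup.mk_inv, hg' m]
    rfl
  have hactθ : ∀ m, act n ((((γ m)⁻¹ : Γ) : PU1n n)) x₀
      = Projectivization.mk ℂ (eC m • (matOf n ((g m)⁻¹) *ᵥ w₀)) (hsvminv m) := by
    intro m
    rw [← hγcoe m, hx₀def, act_mk ((g m)⁻¹) w₀ hw₀ne (hvminv m)]
    exact mk_eq_of_smul (eC m)⁻¹
      (by rw [smul_smul, inv_mul_cancel₀ (heCne m), one_smul])
  set ptau : Prj n := Projectivization.mk ℂ c₁ hc₁ne with hptaudef
  set pth : Prj n := Projectivization.mk ℂ cθ hcθne with hpthdef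
  have horbτv : Tendsto (fun m => eC m • (matOf n (g m) *ᵥ w₀)) atTop (𝓝 (Mlim *ᵥ w₀)) := by
    have hcmv : Continuous fun M : Mat n => M *ᵥ w₀ :=
      Continuous.matrix_mulVec continuous_id continuous_const
    have h := (hcmv.tendsto Mlim).comp hMseq
    refine Tendsto.congr (fun m => ?_) h
    exact Matrix.smul_mulVec (eC m) (matOf n (g m)) w₀
  have horbθv : Tendsto (fun m => eC m • (matOf n ((g m)⁻¹) *ᵥ w₀)) atTop
      (𝓝 (Nlim *ᵥ w₀)) := by
    have hcmv : Continuous fun M : Mat n => M *ᵥ w₀ :=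
      Continuous.matrix_mulVec continuous_id continuous_const
    have h := (hcmv.tendsto Nlim).comp hNseq
    refine Tendsto.congr (fun m => ?_) h
    exact Matrix.smul_mulVec (eC m) (matOf n ((g m)⁻¹)) w₀
  have hmkMw₀ : Projectivization.mk ℂ (Mlim *ᵥ w₀) hMw₀ne = ptau := by
    rw [hptaudef]
    exact mk_eq_of_smul _ hMw₀
  have hmkNw₀ : Projectivization.mk ℂ (Nlim *ᵥ w₀) hNw₀ne = pth := by
    rw [hpthdef]
    exact mk_eq_of_smul _ hNw₀
  have horbτ : Tendsto (fun m => act n ((γ m : PU1n n)) x₀) atTop (𝓝 ptau) := by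
    rw [← hmkMw₀]
    refine Tendsto.congr (fun m => (hactτ m).symm) ?_
    exact tendsto_projmk _ _ hsvm hMw₀ne horbτv
  have horbθ : Tendsto (fun m => act n ((((γ m)⁻¹ : Γ) : PU1n n)) x₀) atTop (𝓝 pth) := by
    rw [← hmkNw₀]
    refine Tendsto.congr (fun m => (hactθ m).symm) ?_
    exact tendsto_projmk _ _ hsvminv hNw₀ne horbθv
  -- boundary membership
  have hptaubdry : ptau ∈ bdry n := by
    show herm n ptau.rep ptau.rep = 0
    obtain ⟨b, hb⟩ := rep_scalar c₁ hc₁ne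
    rw [hptaudef, hb, herm_smul_left, herm_smul_right]
    have hz : herm n c₁ c₁ = 0 := by
      rw [hc₁def, herm_matOf hn0 K1, herm_single_zero hn0]
      exact Pi.single_eq_of_ne (Ne.symm (zero_ne_last hn0)) 1
    rw [hz, mul_zero, mul_zero]
  have hpthbdry : pth ∈ bdry n := by
    show herm n pth.rep pth.rep = 0
    obtain ⟨b, hb⟩ := rep_scalar cθ hcθne
    rw [hpthdef, hb, herm_smul_left, herm_smul_right]
    have hz : herm n cθ cθ = 0 := by
      rw [hcθdef, ← matOf_inv, herm_matOf hn0 K2⁻¹, herm_single_last hn0]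
      exact Pi.single_eq_of_ne (zero_ne_last hn0) 1
    rw [hz, mul_zero, mul_zero]
  have hptauLCG : ptau ∈ LambdaCG n Γ := ⟨hptaubdry, x₀, hx₀ball, γ, hγinj, horbτ⟩
  have hpthLCG : pth ∈ LambdaCG n Γ := by
    refine ⟨hpthbdry, x₀, hx₀ball, fun m => (γ m)⁻¹, ?_, horbθ⟩
    intro a b hab
    exact hγinj (inv_injective hab)
  -- scalars for the representatives of τ and θ
  obtain ⟨aτ, haτ⟩ := rep_scalar Mlim hMlimne
  obtain ⟨aθ, haθ⟩ := rep_scalar Nlim hNlimne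
  -- image sets
  have hImτ : ImSet n (Projectivization.mk ℂ Mlim hMlimne) = {ptau} := by
    ext q
    simp only [ImSet, Set.mem_setOf_eq, Set.mem_singleton_iff]
    constructor
    · rintro ⟨v, hv, rfl⟩
      exact mk_eq_of_smul ((aτ : ℂ) * ((matOf n K2 *ᵥ v) 0))
        (by rw [haτ, Matrix.smul_mulVec, hMlimVec v, smul_smul])
    · rintro rfl
      have hmv : matOf n K2 *ᵥ ((matOf n K2)⁻¹ *ᵥ (Pi.single 0 1 : Vc n))
          = Pi.single 0 1 := by
        rw [Matrix.mulVec_mulVec, Matrix.mul_nonsing_inv _ hM2d, Matrix.one_mulVec]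
      have hvec : (Projectivization.mk ℂ Mlim hMlimne).rep *ᵥ
          ((matOf n K2)⁻¹ *ᵥ (Pi.single 0 1 : Vc n)) = (aτ : ℂ) • c₁ := by
        rw [haτ, Matrix.smul_mulVec, hMlimVec, hmv, Pi.single_eq_same, one_smul]
      have hne2 : (Projectivization.mk ℂ Mlim hMlimne).rep *ᵥ
          ((matOf n K2)⁻¹ *ᵥ (Pi.single 0 1 : Vc n)) ≠ 0 := by
        rw [hvec]
        exact smul_ne_zero (Units.ne_zero aτ) hc₁ne
      exact ⟨(matOf n K2)⁻¹ *ᵥ Pi.single 0 1, hne2, (mk_eq_of_smul (aτ : ℂ) hvec).symm⟩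
  have hImθ : ImSet n (Projectivization.mk ℂ Nlim hNlimne) = {pth} := by
    ext q
    simp only [ImSet, Set.mem_setOf_eq, Set.mem_singleton_iff]
    constructor
    · rintro ⟨v, hv, rfl⟩
      exact mk_eq_of_smul ((aθ : ℂ) * (((matOf n K1)⁻¹ *ᵥ v) (Fin.last n)))
        (by rw [haθ, Matrix.smul_mulVec, hNlimVec v, smul_smul])
    · rintro rfl
      have hmv : (matOf n K1)⁻¹ *ᵥ (matOf n K1 *ᵥ (Pi.single (Fin.last n) 1 : Vc n))
          = Pi.single (Fin.last n) 1 := by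
        rw [Matrix.mulVec_mulVec, Matrix.nonsing_inv_mul _ hM1d, Matrix.one_mulVec]
      have hvec : (Projectivization.mk ℂ Nlim hNlimne).rep *ᵥ
          (matOf n K1 *ᵥ (Pi.single (Fin.last n) 1 : Vc n)) = (aθ : ℂ) • cθ := by
        rw [haθ, Matrix.smul_mulVec, hNlimVec, hmv, Pi.single_eq_same, one_smul]
      have hne2 : (Projectivization.mk ℂ Nlim hNlimne).rep *ᵥ
          (matOf n K1 *ᵥ (Pi.single (Fin.last n) 1 : Vc n)) ≠ 0 := by
        rw [hvec]
        exact smul_ne_zero (Units.ne_zero aθ) hcθne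
      exact ⟨matOf n K1 *ᵥ Pi.single (Fin.last n) 1, hne2,
        (mk_eq_of_smul (aθ : ℂ) hvec).symm⟩
  -- orthogonal hyperplanes vs kernels
  have hconjne : ∀ z : ℂˣ, conj (z : ℂ) ≠ 0 := by
    intro z hz
    apply Units.ne_zero z
    have := congrArg (starRingEnd ℂ) hz
    simpa using this
  have hOrthτ : orthHyp n ptau = KerSet n (Projectivization.mk ℂ Nlim hNlimne) := by
    obtain ⟨b, hb⟩ := rep_scalar c₁ hc₁ne
    ext q
    simp only [orthHyp, KerSet, Set.mem_setOf_eq]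
    have hL : herm n q.rep ptau.rep
        = conj (b : ℂ) * (((matOf n K1)⁻¹ *ᵥ q.rep) (Fin.last n)) := by
      rw [hptaudef, hb, herm_smul_right]
      congr 1
      have h3 : matOf n K1 *ᵥ ((matOf n K1)⁻¹ *ᵥ q.rep) = q.rep := by
        rw [Matrix.mulVec_mulVec, Matrix.mul_nonsing_inv _ hM1d, Matrix.one_mulVec]
      calc herm n q.rep c₁
          = herm n (matOf n K1 *ᵥ ((matOf n K1)⁻¹ *ᵥ q.rep))
              (matOf n K1 *ᵥ Pi.single 0 1) := by rw [h3, hc₁def]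
        _ = herm n ((matOf n K1)⁻¹ *ᵥ q.rep) (Pi.single 0 1) := herm_matOf hn0 K1 _ _
        _ = ((matOf n K1)⁻¹ *ᵥ q.rep) (Fin.last n) := herm_single_zero hn0 _
    have hR : (Projectivization.mk ℂ Nlim hNlimne).rep *ᵥ q.rep
        = ((aθ : ℂ) * (((matOf n K1)⁻¹ *ᵥ q.rep) (Fin.last n))) • cθ := by
      rw [haθ, Matrix.smul_mulVec, hNlimVec, smul_smul]
    constructor
    · intro h
      rw [hL] at h
      have h2 : ((matOf n K1)⁻¹ *ᵥ q.rep) (Fin.last n) = 0 :=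
        (mul_eq_zero.mp h).resolve_left (hconjne b)
      rw [hR, h2, mul_zero, zero_smul]
    · intro h
      rw [hR] at h
      rcases smul_eq_zero.mp h with h' | h'
      · rcases mul_eq_zero.mp h' with h'' | h''
        · exact absurd h'' (Units.ne_zero aθ)
        · rw [hL, h'', mul_zero]
      · exact absurd h' hcθne
  have hOrthθ : orthHyp n pth = KerSet n (Projectivization.mk ℂ Mlim hMlimne) := by
    obtain ⟨b, hb⟩ := rep_scalar cθ hcθne
    ext q
    simp only [orthHyp, KerSet, Set.mem_setOf_eq]
    have hL : herm n q.rep pth.rep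
        = conj (b : ℂ) * ((matOf n K2 *ᵥ q.rep) 0) := by
      rw [hpthdef, hb, herm_smul_right]
      congr 1
      have h3 : (matOf n K2)⁻¹ *ᵥ (matOf n K2 *ᵥ q.rep) = q.rep := by
        rw [Matrix.mulVec_mulVec, Matrix.nonsing_inv_mul _ hM2d, Matrix.one_mulVec]
      calc herm n q.rep cθ
          = herm n ((matOf n K2)⁻¹ *ᵥ (matOf n K2 *ᵥ q.rep))
              ((matOf n K2)⁻¹ *ᵥ Pi.single (Fin.last n) 1) := by rw [h3, hcθdef]
        _ = herm n (matOf n (K2⁻¹) *ᵥ (matOf n K2 *ᵥ q.rep))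
              (matOf n (K2⁻¹) *ᵥ Pi.single (Fin.last n) 1) := by rw [matOf_inv]
        _ = herm n (matOf n K2 *ᵥ q.rep) (Pi.single (Fin.last n) 1) :=
              herm_matOf hn0 (K2⁻¹) _ _
        _ = (matOf n K2 *ᵥ q.rep) 0 := herm_single_last hn0 _
    have hR : (Projectivization.mk ℂ Mlim hMlimne).rep *ᵥ q.rep
        = ((aτ : ℂ) * ((matOf n K2 *ᵥ q.rep) 0)) • c₁ := by
      rw [haτ, Matrix.smul_mulVec, hMlimVec, smul_smul]
    constructor
    · intro h
      rw [hL] at h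
      have h2 : (matOf n K2 *ᵥ q.rep) 0 = 0 :=
        (mul_eq_zero.mp h).resolve_left (hconjne b)
      rw [hR, h2, mul_zero, zero_smul]
    · intro h
      rw [hR] at h
      rcases smul_eq_zero.mp h with h' | h'
      · rcases mul_eq_zero.mp h' with h'' | h''
        · exact absurd h'' (Units.ne_zero aτ)
        · rw [hL, h'', mul_zero]
      · exact absurd h' hc₁ne
  exact ⟨Projectivization.mk ℂ Mlim hMlimne, Projectivization.mk ℂ Nlim hNlimne,
    ptau, pth, g, hg, hqτt, hqθt, hptauLCG, hpthLCG, hImτ, hImθ, hOrthτ, hOrthθ⟩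


end CKG
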